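/- Let n ≥ 2, c ∈ ℂ^×, and let x = (x_2,…,x_{2n−1}) be nonzero complex numbers such that all denominators occurring below are nonzero. Let x′ = e_0^c(x). Then y_j(x′) = y_j(x) for every j ≠ n and y_n(x′) = c·y_n(x). (That is, under the birational change of variables y(x), the explicit map e_0^c corresponds to multiplying the single coordinate y_n by c.) -/

import Mathlib

noncomputable section

/-- `Sf n x k = ∑_{j=2}^{k} x_j / x_{n+j-1}` (so `Sf n x 1 = 0`,
and `S(x) = Sf n x n`). -/
def Sf (n : ℕ) (x : ℕ → ℂ) (k : ℕ) : ℂ :=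
  ∑ j ∈ Finset.Icc 2 k, x j / x (n + j - 1)

/-- `Tf n x k = ∑_{j=k+1}^{n} x_j / x_{n+j-1}` (so `Tf n x n = 0`). -/
def Tf (n : ℕ) (x : ℕ → ℂ) (k : ℕ) : ℂ :=
  ∑ j ∈ Finset.Icc (k + 1) n, x j / x (n + j - 1)

/-- The rational map `e_0^c`:
`x′_k = x_k·S/(c·S_k + T_k)` for `2 ≤ k ≤ n-1`, `x′_n = x_n/c`, `x′_{n+1} = x_{n+1}/c`,
`x′_{n+l} = x_{n+l}·(c·S_l + T_l)/(c·S)` for `2 ≤ l ≤ n-1`. -/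
def e0M (n : ℕ) (c : ℂ) (x : ℕ → ℂ) (k : ℕ) : ℂ :=
  if k ≤ n - 1 then x k * Sf n x n / (c * Sf n x k + Tf n x k)
  else if k ≤ n + 1 then x k / c
  else x k * (c * Sf n x (k - n) + Tf n x (k - n)) / (c * Sf n x n)

/-- The map `x ↦ y(x)`. -/
def yOf (n : ℕ) (x : ℕ → ℂ) (k : ℕ) : ℂ :=
  if k = 1 then (Tf n x 1)⁻¹
  else if k ≤ n - 1 then x k * (Tf n x k)⁻¹
  else if k = n then (x n)⁻¹
  else (x k / x n) * Tf n x (k - n)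

lemma Sf_one (n : ℕ) (x : ℕ → ℂ) : Sf n x 1 = 0 := by
  simp [Sf]

lemma Tf_self (n : ℕ) (x : ℕ → ℂ) : Tf n x n = 0 := by
  simp [Tf]

lemma Sf_add_Tf (n : ℕ) (x : ℕ → ℂ) (k : ℕ) (h1 : 1 ≤ k) (h2 : k ≤ n) :
    Sf n x k + Tf n x k = Sf n x n := by
  unfold Sf Tf
  rw [show (2:ℕ) = 1 + 1 from rfl, Finset.Icc_add_one_left_eq_Ioc, Finset.Icc_add_one_left_eq_Ioc, Finset.Icc_add_one_left_eq_Ioc]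
  exact Finset.sum_Ioc_consecutive _ h1 h2

lemma Tf_one (n : ℕ) (x : ℕ → ℂ) : Tf n x 1 = Sf n x n := by
  rcases n with _ | _ | m
  · simp [Sf, Tf]
  · simp [Sf, Tf]
  · have h := Sf_add_Tf (m + 2) x 1 le_rfl (by omega)
    rwa [Sf_one, zero_add] at h

lemma Tf_succ (n : ℕ) (x : ℕ → ℂ) (k : ℕ) (h : k < n) :
    Tf n x k = x (k + 1) / x (n + k) + Tf n x (k + 1) := by
  unfold Tf
  have hset : Finset.Icc (k + 1) n = insert (k + 1) (Finset.Icc (k + 2) n) := by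
    ext m; simp; omega
  have h2 : n + (k + 1) - 1 = n + k := by omega
  rw [hset, Finset.sum_insert (by simp), h2]

lemma e0M_left (n : ℕ) (hn : 2 ≤ n) (c : ℂ) (hc : c ≠ 0) (x : ℕ → ℂ)
    (hS : Sf n x n ≠ 0) (j : ℕ) (h2 : 2 ≤ j) (hj : j ≤ n) :
    e0M n c x j = x j * Sf n x n / (c * Sf n x j + Tf n x j) := by
  rcases lt_or_eq_of_le hj with h | rfl
  · rw [e0M, if_pos (by omega)]
  · rw [e0M, if_neg (by omega), if_pos (by omega), Tf_self, add_zero]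
    field_simp

lemma e0M_right (n : ℕ) (hn : 2 ≤ n) (c : ℂ) (hc : c ≠ 0) (x : ℕ → ℂ)
    (hS : Sf n x n ≠ 0) (k : ℕ) (h1 : 1 ≤ k) (hk : k ≤ n - 1) :
    e0M n c x (n + k) = x (n + k) * (c * Sf n x k + Tf n x k) / (c * Sf n x n) := by
  rcases eq_or_lt_of_le h1 with rfl | h
  · rw [e0M, if_neg (by omega), if_pos (by omega), Sf_one, Tf_one]
    field_simp
    ring
  · rw [e0M, if_neg (by omega), if_neg (by omega), Nat.add_sub_cancel_left]

lemma key_lemma (n : ℕ) (hn : 2 ≤ n) (c : ℂ) (hc : c ≠ 0) (x : ℕ → ℂ)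
    (hx : ∀ k, 2 ≤ k → k ≤ 2 * n - 1 → x k ≠ 0)
    (hS : Sf n x n ≠ 0)
    (hden : ∀ k, 2 ≤ k → k ≤ n - 1 → c * Sf n x k + Tf n x k ≠ 0) :
    ∀ d k, k + d = n → 1 ≤ k →
      Tf n (e0M n c x) k * (c * Sf n x k + Tf n x k) = Sf n x n * Tf n x k := by
  have hD : ∀ k, 1 ≤ k → k ≤ n → c * Sf n x k + Tf n x k ≠ 0 := by
    intro k h1 h2
    rcases eq_or_lt_of_le h1 with rfl | h1'
    · rw [Sf_one, Tf_one]; simpa using hS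
    · rcases eq_or_lt_of_le h2 with rfl | h2'
      · rw [Tf_self, add_zero]; exact mul_ne_zero hc hS
      · exact hden k (by omega) (by omega)
  intro d
  induction d with
  | zero =>
    intro k hk _
    have : k = n := by omega
    subst this
    simp [Tf_self]
  | succ d ih =>
    intro k hk h1
    have hkn : k ≤ n - 1 := by omega
    have ihk := ih (k + 1) (by omega) (by omega)
    have hx1 : x (k + 1) ≠ 0 := hx _ (by omega) (by omega)
    have hx2 : x (n + k) ≠ 0 := hx _ (by omega) (by omega)
    have hD0 : c * Sf n x k + Tf n x k ≠ 0 := hD k h1 (by omega)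
    have hD1 : c * Sf n x (k + 1) + Tf n x (k + 1) ≠ 0 := hD (k + 1) (by omega) (by omega)
    have hA : Sf n x k = Sf n x n - Tf n x k :=
      eq_sub_of_add_eq (Sf_add_Tf n x k h1 (by omega))
    have hB : Sf n x (k + 1) = Sf n x n - Tf n x (k + 1) :=
      eq_sub_of_add_eq (Sf_add_Tf n x (k + 1) (by omega) (by omega))
    have ht : x (k + 1) = (Tf n x k - Tf n x (k + 1)) * x (n + k) := by
      have h3 := Tf_succ n x k (by omega)
      field_simp at h3
      linear_combination -h3
    have hT'eq : Tf n (e0M n c x) (k + 1)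
        = Sf n x n * Tf n x (k + 1) / (c * Sf n x (k + 1) + Tf n x (k + 1)) :=
      (eq_div_iff hD1).mpr ihk
    rw [Tf_succ n (e0M n c x) k (by omega),
        e0M_left n hn c hc x hS (k + 1) (by omega) (by omega),
        e0M_right n hn c hc x hS k h1 hkn, hT'eq, ht, hA, hB]
    rw [hA] at hD0
    rw [hB] at hD1
    field_simp
    ring

/-- in the coordinates `y(x)`, the map `e_0^c` multiplies the single
coordinate `y_n` by `c` and fixes all other coordinates. -/
theorem stmt4 (n : ℕ) (hn : 2 ≤ n) (c : ℂ) (hc : c ≠ 0) (x : ℕ → ℂ)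
    (hx : ∀ k, 2 ≤ k → k ≤ 2 * n - 1 → x k ≠ 0)
    (hT : ∀ k, 1 ≤ k → k ≤ n - 1 → Tf n x k ≠ 0)
    (hS : Sf n x n ≠ 0)
    (hden : ∀ k, 2 ≤ k → k ≤ n - 1 → c * Sf n x k + Tf n x k ≠ 0)
    (hT' : ∀ k, 1 ≤ k → k ≤ n - 1 → Tf n (e0M n c x) k ≠ 0) :
    (∀ j, 1 ≤ j → j ≤ 2 * n - 2 → j ≠ n → yOf n (e0M n c x) j = yOf n x j) ∧
    yOf n (e0M n c x) n = c * yOf n x n := by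
  have hD : ∀ k, 1 ≤ k → k ≤ n → c * Sf n x k + Tf n x k ≠ 0 := by
    intro k h1 h2
    rcases eq_or_lt_of_le h1 with rfl | h1'
    · rw [Sf_one, Tf_one]; simpa using hS
    · rcases eq_or_lt_of_le h2 with rfl | h2'
      · rw [Tf_self, add_zero]; exact mul_ne_zero hc hS
      · exact hden k (by omega) (by omega)
  have key : ∀ k, 1 ≤ k → k ≤ n →
      Tf n (e0M n c x) k = Sf n x n * Tf n x k / (c * Sf n x k + Tf n x k) := by
    intro k h1 h2
    exact (eq_div_iff (hD k h1 h2)).mpr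
      (key_lemma n hn c hc x hx hS hden (n - k) k (by omega) h1)
  have hxn : x n ≠ 0 := hx n hn (by omega)
  have he0n : e0M n c x n = x n / c := by
    rw [e0M, if_neg (by omega), if_pos (by omega)]
  constructor
  · intro j hj1 hj2 hjn
    rcases eq_or_lt_of_le hj1 with rfl | hj1'
    · -- j = 1
      rw [yOf, if_pos rfl, yOf, if_pos rfl]
      have h := key 1 le_rfl (by omega)
      rw [Sf_one, Tf_one n x] at h
      have h2 : Tf n (e0M n c x) 1 = Sf n x n := by
        rw [h]; field_simp; simp [hS]
      rw [h2, Tf_one n x]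
    · rcases le_or_gt j (n - 1) with hjle | hjgt
      · -- 2 ≤ j ≤ n - 1
        have hTj := hT j (by omega) hjle
        have hDj := hD j (by omega) (by omega)
        rw [yOf, if_neg (by omega), if_pos hjle, yOf, if_neg (by omega), if_pos hjle,
          e0M_left n hn c hc x hS j (by omega) (by omega), key j (by omega) (by omega)]
        field_simp
      · -- n + 1 ≤ j ≤ 2n - 2
        obtain ⟨l, rfl⟩ : ∃ l, j = n + l := ⟨j - n, by omega⟩
        have hl1 : 1 ≤ l := by omega
        have hl2 : l ≤ n - 2 := by omega
        have hTl := hT l hl1 (by omega)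
        have hDl := hD l hl1 (by omega)
        have hxnl : x (n + l) ≠ 0 := hx _ (by omega) (by omega)
        rw [yOf, if_neg (by omega), if_neg (by omega), if_neg (by omega),
          yOf, if_neg (by omega), if_neg (by omega), if_neg (by omega),
          Nat.add_sub_cancel_left, he0n,
          e0M_right n hn c hc x hS l hl1 (by omega), key l hl1 (by omega)]
        field_simp
  · rw [yOf, if_neg (by omega), if_neg (by omega), if_pos rfl,
      yOf, if_neg (by omega), if_neg (by omega), if_pos rfl, he0n]
    field_simp
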